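/- For a nonnegative integer z and τ > 1, with α(τ) implicitly defined by 1/τ = e^{-α/2} Σ_{i=0}^{z} (α/2)^i/i!, the second derivative of α with respect to τ is negative if and only if z! < 2z·z!/α + 2τ·(α/2)^z·e^{-α/2}. -/

import Mathlib

lemma key_deriv (z : ℕ) (x : ℝ) :
    HasDerivAt (fun y : ℝ => Real.exp (-y / 2) * ∑ i ∈ Finset.range (z + 1), (y / 2) ^ i / (i.factorial : ℝ))
      (-(Real.exp (-x / 2) * (x / 2) ^ z / (2 * (z.factorial : ℝ)))) x := by
  induction z with
  | zero =>
      have h0 : HasDerivAt (fun y : ℝ => -y / 2) (-(1 / 2)) x := by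
        have := ((hasDerivAt_id x).neg.div_const (2:ℝ)); convert this using 1 <;> first | rfl | norm_num
      have hE : HasDerivAt (fun y : ℝ => Real.exp (-y / 2)) (Real.exp (-x / 2) * (-(1 / 2))) x :=
        h0.exp
      have : (fun y : ℝ => Real.exp (-y / 2) * ∑ i ∈ Finset.range 1, (y / 2) ^ i / (i.factorial : ℝ))
          = fun y : ℝ => Real.exp (-y / 2) := by
        funext y; simp
      rw [this]
      convert hE using 1
      simp; ring
  | succ n ih =>
      have h0 : HasDerivAt (fun y : ℝ => -y / 2) (-(1 / 2)) x := by
        have := ((hasDerivAt_id x).neg.div_const (2:ℝ)); convert this using 1 <;> first | rfl | norm_num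
      have hE : HasDerivAt (fun y : ℝ => Real.exp (-y / 2)) (Real.exp (-x / 2) * (-(1 / 2))) x :=
        h0.exp
      have hP : HasDerivAt (fun y : ℝ => (y / 2) ^ (n + 1))
          (((n : ℝ) + 1) * (x / 2) ^ n * (1 / 2)) x := by
        have := ((hasDerivAt_id x).div_const 2).pow (n + 1)
        convert this using 1 <;> first | rfl | norm_num
      have h2 : HasDerivAt (fun y : ℝ => Real.exp (-y / 2) * (y / 2) ^ (n + 1) / ((n + 1).factorial : ℝ))
          ((Real.exp (-x / 2) * (-(1 / 2)) * (x / 2) ^ (n + 1)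
            + Real.exp (-x / 2) * (((n : ℝ) + 1) * (x / 2) ^ n * (1 / 2))) / ((n + 1).factorial : ℝ)) x :=
        (hE.mul hP).div_const _
      have hfun : (fun y : ℝ => Real.exp (-y / 2) * ∑ i ∈ Finset.range (n + 2), (y / 2) ^ i / (i.factorial : ℝ))
          = fun y : ℝ => (Real.exp (-y / 2) * ∑ i ∈ Finset.range (n + 1), (y / 2) ^ i / (i.factorial : ℝ))
            + Real.exp (-y / 2) * (y / 2) ^ (n + 1) / ((n + 1).factorial : ℝ) := by
        funext y; rw [Finset.sum_range_succ]; ring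
      rw [hfun]
      refine (ih.add h2).congr_deriv ?_
      have hfn : ((n.factorial : ℝ)) ≠ 0 := Nat.cast_ne_zero.mpr n.factorial_ne_zero
      have hfs : (((n + 1).factorial : ℝ)) = ((n : ℝ) + 1) * (n.factorial : ℝ) := by
        rw [Nat.factorial_succ]; push_cast; ring
      have hn1 : ((n : ℝ) + 1) ≠ 0 := by positivity
      rw [hfs]
      field_simp
      ring

lemma first_deriv_eq (z : ℕ) (a : ℝ → ℝ)
    (ha : ∀ τ : ℝ, 1 < τ → 0 < a τ ∧
      1 / τ = Real.exp (-(a τ) / 2) * ∑ i ∈ Finset.range (z + 1), (a τ / 2) ^ i / (i.factorial : ℝ))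
    (hdiff : ∀ τ : ℝ, 1 < τ → DifferentiableAt ℝ a τ ∧ DifferentiableAt ℝ (deriv a) τ) :
    ∀ t : ℝ, 1 < t → deriv a t =
      2 * (z.factorial : ℝ) * Real.exp (a t / 2) / (t ^ 2 * (a t / 2) ^ z) := by
  intro t ht
  have ht0 : (0 : ℝ) < t := lt_trans one_pos ht
  have hA : 0 < a t := (ha t ht).1
  have hcomp : HasDerivAt
      (fun s : ℝ => Real.exp (-(a s) / 2) * ∑ i ∈ Finset.range (z + 1), (a s / 2) ^ i / (i.factorial : ℝ))
      (-(Real.exp (-(a t) / 2) * (a t / 2) ^ z / (2 * (z.factorial : ℝ))) * deriv a t) t :=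
    (key_deriv z (a t)).comp t (hdiff t ht).1.hasDerivAt
  have hev : (fun s : ℝ => Real.exp (-(a s) / 2) * ∑ i ∈ Finset.range (z + 1), (a s / 2) ^ i / (i.factorial : ℝ))
      =ᶠ[nhds t] fun s : ℝ => 1 / s := by
    filter_upwards [isOpen_Ioi.mem_nhds (show t ∈ Set.Ioi (1:ℝ) from ht)] with s hs
    exact ((ha s hs).2).symm
  have hinv : HasDerivAt (fun s : ℝ => 1 / s) (-(t ^ 2)⁻¹) t := by
    simpa [one_div] using hasDerivAt_inv (ne_of_gt ht0)
  have heq : -(Real.exp (-(a t) / 2) * (a t / 2) ^ z / (2 * (z.factorial : ℝ))) * deriv a t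
      = -(t ^ 2)⁻¹ := (hcomp.congr_of_eventuallyEq hev.symm).unique hinv
  have hexp : Real.exp (-(a t) / 2) = (Real.exp (a t / 2))⁻¹ := by
    rw [← Real.exp_neg]; ring_nf
  have hfz : (0:ℝ) < (z.factorial : ℝ) := by positivity
  have hpz : (0:ℝ) < (a t / 2) ^ z := by positivity
  have hez : (0:ℝ) < Real.exp (a t / 2) := Real.exp_pos _
  rw [hexp] at heq
  rw [eq_div_iff (by positivity), div_pow]
  field_simp at heq ⊢
  rw [div_pow] at heq
  field_simp at heq
  linarith

lemma pow_pred_eq (z : ℕ) (A : ℝ) (hA : A ≠ 0) :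
    (z : ℝ) * (A / 2) ^ (z - 1) = (z : ℝ) * (A / 2) ^ z * (2 / A) := by
  cases z with
  | zero => simp
  | succ n =>
      have h : (A / 2) ^ (n + 1 - 1) = (A / 2) ^ n := by norm_num
      rw [h, pow_succ]
      field_simp

theorem second_deriv_alpha_neg_iff (z : ℕ) (a : ℝ → ℝ)
    (ha : ∀ τ : ℝ, 1 < τ → 0 < a τ ∧
      1 / τ = Real.exp (-(a τ) / 2) * ∑ i ∈ Finset.range (z + 1), (a τ / 2) ^ i / (i.factorial : ℝ))
    (hdiff : ∀ τ : ℝ, 1 < τ → DifferentiableAt ℝ a τ ∧ DifferentiableAt ℝ (deriv a) τ) :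
    ∀ τ : ℝ, 1 < τ →
      (deriv (deriv a) τ < 0 ↔
        (z.factorial : ℝ) < 2 * z * (z.factorial : ℝ) / a τ +
          2 * τ * (a τ / 2) ^ z * Real.exp (-(a τ) / 2)) := by
  intro τ hτ
  have hτ0 : (0 : ℝ) < τ := lt_trans one_pos hτ
  have hA : 0 < a τ := (ha τ hτ).1
  have ha' : HasDerivAt a (deriv a τ) τ := (hdiff τ hτ).1.hasDerivAt
  have hfd := first_deriv_eq z a ha hdiff
  set K : ℝ := (z.factorial : ℝ) with hK
  have hKpos : 0 < K := by positivity
  have hevG : deriv a =ᶠ[nhds τ]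
      fun t : ℝ => 2 * K * Real.exp (a t / 2) / (t ^ 2 * (a t / 2) ^ z) := by
    filter_upwards [isOpen_Ioi.mem_nhds (show τ ∈ Set.Ioi (1:ℝ) from hτ)] with s hs
    exact hfd s hs
  have hdd : deriv (deriv a) τ
      = deriv (fun t : ℝ => 2 * K * Real.exp (a t / 2) / (t ^ 2 * (a t / 2) ^ z)) τ :=
    hevG.deriv_eq
  have hN : HasDerivAt (fun t : ℝ => 2 * K * Real.exp (a t / 2))
      (2 * K * (Real.exp (a τ / 2) * (deriv a τ / 2))) τ :=
    ((Real.hasDerivAt_exp (a τ / 2)).comp τ (ha'.div_const 2)).const_mul (2 * K)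
  have hDp : HasDerivAt (fun t : ℝ => t ^ 2 * (a t / 2) ^ z)
      ((2 : ℕ) * τ ^ (2 - 1) * (a τ / 2) ^ z
        + τ ^ 2 * ((z : ℝ) * (a τ / 2) ^ (z - 1) * (deriv a τ / 2))) τ :=
    (hasDerivAt_pow 2 τ).mul ((ha'.div_const 2).pow z)
  have hDne : τ ^ 2 * (a τ / 2) ^ z ≠ 0 := by positivity
  have hG : HasDerivAt (fun t : ℝ => 2 * K * Real.exp (a t / 2) / (t ^ 2 * (a t / 2) ^ z)) _ τ := hN.div hDp hDne
  have hexp : Real.exp (-(a τ) / 2) = (Real.exp (a τ / 2))⁻¹ := by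
    rw [← Real.exp_neg]; ring_nf
  have hez : (0:ℝ) < Real.exp (a τ / 2) := Real.exp_pos _
  have hpz : (0:ℝ) < (a τ / 2) ^ z := by positivity
  have hmain : deriv (deriv a) τ
      = (2 * K * (Real.exp (a τ / 2)) ^ 2 / (τ ^ 2 * (a τ / 2) ^ z) ^ 2)
        * (K - (2 * z * K / a τ + 2 * τ * (a τ / 2) ^ z * Real.exp (-(a τ) / 2))) := by
    rw [hdd, hG.deriv, hfd τ hτ, pow_pred_eq z (a τ) hA.ne', hexp]
    field_simp
    ring
  have hC : 0 < 2 * K * (Real.exp (a τ / 2)) ^ 2 / (τ ^ 2 * (a τ / 2) ^ z) ^ 2 := by positivity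
  rw [hmain]
  constructor
  · intro h
    by_contra hc
    push_neg at hc
    nlinarith
  · intro h
    exact mul_neg_of_pos_of_neg hC (by linarith)
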